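/- The set of elements that must be swapped with i gives a length lower bound: for any transform τ ∈ A(π,σ) (sequence of adjacent transpositions converting π to σ), the walk of element i through positions under τ has length at least |I_i(π,σ)|, where I_i(π,σ) is the set of elements j such that π and σ disagree on the relative order of the pair {i,j}. -/

import Mathlib

open Equiv Finset

/-- The adjacent transposition swapping positions `i` and `i+1` (0-indexed);
identity if out of range. -/
def adjSwap (n i : ℕ) : Equiv.Perm (Fin n) :=
  if h : i + 1 < n then Equiv.swap ⟨i, Nat.lt_of_succ_lt h⟩ ⟨i + 1, h⟩ else 1

/-- `ω` is between `π` and `σ`: on every pair `{a,b}`, `ω` agrees with `π` or with `σ`. -/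
def Between {n : ℕ} (π ω σ : Equiv.Perm (Fin n)) : Prop :=
  ∀ a b : Fin n, (π⁻¹ a < π⁻¹ b ↔ ω⁻¹ a < ω⁻¹ b) ∨ (σ⁻¹ a < σ⁻¹ b ↔ ω⁻¹ a < ω⁻¹ b)

/-- Kendall tau distance: minimum number of adjacent transpositions transforming `π` into `σ`. -/
noncomputable def kendall {n : ℕ} (π σ : Equiv.Perm (Fin n)) : ℕ :=
  sInf {s | ∃ l : List ℕ, (∀ i ∈ l, i + 1 < n) ∧
    σ = π * (l.map (adjSwap n)).prod ∧ l.length = s}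

/-- The set of inversions between `π` and `σ` (each unordered pair `{i,j}` of disagreement
is recorded as the ordered pair `(i,j)` with `i` ranked before `j` by `π`). -/
def invSet {n : ℕ} (π σ : Equiv.Perm (Fin n)) : Finset (Fin n × Fin n) :=
  Finset.univ.filter fun p => π⁻¹ p.1 < π⁻¹ p.2 ∧ σ⁻¹ p.2 < σ⁻¹ p.1

/-- Elements `j` on whose relative order with `i` the permutations `π` and `σ` disagree. -/
def invWith {n : ℕ} (π σ : Equiv.Perm (Fin n)) (i : Fin n) : Finset (Fin n) :=
  Finset.univ.filter fun j => ¬(π⁻¹ i < π⁻¹ j ↔ σ⁻¹ i < σ⁻¹ j)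

/-- Weighted Kendall distance for weight function `φ` on adjacent transpositions
(`φ h` is the weight of swapping positions `h, h+1`, 0-indexed). -/
noncomputable def wKendall {n : ℕ} (φ : ℕ → ℝ) (π σ : Equiv.Perm (Fin n)) : ℝ :=
  sInf {w | ∃ l : List ℕ, (∀ i ∈ l, i + 1 < n) ∧
    σ = π * (l.map (adjSwap n)).prod ∧ (l.map φ).sum = w}

/-- `w(k:l)`: sum of adjacent-transposition weights between positions `min k l` and `max k l - 1`. -/
def wsum (φ : ℕ → ℝ) (k l : ℕ) : ℝ := ∑ h ∈ Finset.Ico (min k l) (max k l), φ h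

/-- The generalized (weighted) Spearman footrule `D_φ`. -/
noncomputable def DKendall {n : ℕ} (φ : ℕ → ℝ) (π σ : Equiv.Perm (Fin n)) : ℝ :=
  ∑ i : Fin n, wsum φ ((π⁻¹ i : Fin n) : ℕ) ((σ⁻¹ i : Fin n) : ℕ)

/-- Weighted transposition distance with weight function `φ` on transpositions. -/
noncomputable def wTrans {n : ℕ} (φ : Fin n → Fin n → ℝ) (π σ : Equiv.Perm (Fin n)) : ℝ :=
  sInf {w | ∃ l : List (Fin n × Fin n), (∀ p ∈ l, p.1 ≠ p.2) ∧
    σ = π * (l.map fun p => Equiv.swap p.1 p.2).prod ∧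
    (l.map fun p => φ p.1 p.2).sum = w}

/-- Weight of a path (as a list of vertices) in the complete graph `K_φ`. -/
def pathWt {n : ℕ} (φ : Fin n → Fin n → ℝ) (p : List (Fin n)) : ℝ :=
  ((p.zip p.tail).map fun q => φ q.1 q.2).sum

/-- `p` is a path from `a` to `b` (consecutive vertices distinct). -/
def IsPath {n : ℕ} (p : List (Fin n)) (a b : Fin n) : Prop :=
  p.head? = some a ∧ p.getLast? = some b ∧ p.Chain' (· ≠ ·)

/-- Minimum weight of a path from `a` to `b` in `K_φ`. -/
noncomputable def minPathWt {n : ℕ} (φ : Fin n → Fin n → ℝ) (a b : Fin n) : ℝ :=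
  sInf {w | ∃ p : List (Fin n), IsPath p a b ∧ pathWt φ p = w}

/-- The footrule-type lower/upper bounding function `D_φ` for transposition weights. -/
noncomputable def DTrans {n : ℕ} (φ : Fin n → Fin n → ℝ) (π σ : Equiv.Perm (Fin n)) : ℝ :=
  ∑ i : Fin n, minPathWt φ (π⁻¹ i) (σ⁻¹ i)

lemma adjFlip {n h : ℕ} (hh : h + 1 < n) (p q : Fin n)
    (hpq : ¬(p < q ↔ Equiv.swap (⟨h, Nat.lt_of_succ_lt hh⟩ : Fin n) ⟨h+1, hh⟩ p <
      Equiv.swap (⟨h, Nat.lt_of_succ_lt hh⟩ : Fin n) ⟨h+1, hh⟩ q)) :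
    (p = ⟨h, Nat.lt_of_succ_lt hh⟩ ∧ q = ⟨h+1, hh⟩) ∨
    (p = ⟨h+1, hh⟩ ∧ q = ⟨h, Nat.lt_of_succ_lt hh⟩) := by
  set u : Fin n := ⟨h, Nat.lt_of_succ_lt hh⟩ with hu
  set v : Fin n := ⟨h+1, hh⟩ with hv
  rcases eq_or_ne p u with hp1 | hp1
  · rcases eq_or_ne q u with hq1 | hq1
    · subst hp1 hq1; simp at hpq
    · rcases eq_or_ne q v with hq2 | hq2
      · exact Or.inl ⟨hp1, hq2⟩
      · exfalso
        subst hp1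
        rw [Equiv.swap_apply_left, Equiv.swap_apply_of_ne_of_ne hq1 hq2] at hpq
        have h1 : (q : ℕ) ≠ h := fun hc => hq1 (Fin.ext hc)
        have h2 : (q : ℕ) ≠ h + 1 := fun hc => hq2 (Fin.ext hc)
        simp only [Fin.lt_def, hu, hv] at hpq
        omega
  · rcases eq_or_ne p v with hp2 | hp2
    · rcases eq_or_ne q u with hq1 | hq1
      · exact Or.inr ⟨hp2, hq1⟩
      · rcases eq_or_ne q v with hq2 | hq2
        · subst hp2 hq2; simp at hpq
        · exfalso
          subst hp2
          rw [Equiv.swap_apply_right, Equiv.swap_apply_of_ne_of_ne hq1 hq2] at hpq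
          have h1 : (q : ℕ) ≠ h := fun hc => hq1 (Fin.ext hc)
          have h2 : (q : ℕ) ≠ h + 1 := fun hc => hq2 (Fin.ext hc)
          simp only [Fin.lt_def, hu, hv] at hpq
          omega
    · exfalso
      rw [Equiv.swap_apply_of_ne_of_ne hp1 hp2] at hpq
      have hpv : (p : ℕ) ≠ h := fun hc => hp1 (Fin.ext hc)
      have hpv2 : (p : ℕ) ≠ h + 1 := fun hc => hp2 (Fin.ext hc)
      rcases eq_or_ne q u with hq1 | hq1
      · subst hq1
        rw [Equiv.swap_apply_left] at hpq
        simp only [Fin.lt_def, hu, hv] at hpq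
        omega
      · rcases eq_or_ne q v with hq2 | hq2
        · subst hq2
          rw [Equiv.swap_apply_right] at hpq
          simp only [Fin.lt_def, hu, hv] at hpq
          omega
        · rw [Equiv.swap_apply_of_ne_of_ne hq1 hq2] at hpq
          exact hpq Iff.rfl

/-- prefix permutation -/
def omegaP {n : ℕ} (π : Equiv.Perm (Fin n)) (l : List ℕ) (t : ℕ) : Equiv.Perm (Fin n) :=
  π * ((l.take t).map (adjSwap n)).prod

theorem stmt8 (n : ℕ) (π σ : Equiv.Perm (Fin n)) (l : List ℕ)
    (hvalid : ∀ i ∈ l, i + 1 < n)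
    (htrans : σ = π * (l.map (adjSwap n)).prod) (i : Fin n) :
    (invWith π σ i).card ≤
      ((Finset.range l.length).filter fun t =>
        (π * ((l.take t).map (adjSwap n)).prod)⁻¹ i ≠
        (π * ((l.take (t + 1)).map (adjSwap n)).prod)⁻¹ i).card := by
  classical
  have H : (invWith π σ i).card ≤
      ((Finset.range l.length).filter fun t =>
        (omegaP π l t)⁻¹ i ≠ (omegaP π l (t + 1))⁻¹ i).card := by
    have h0 : omegaP π l 0 = π := by simp [omegaP]
    have hfin : omegaP π l l.length = σ := by
      simp only [omegaP, List.take_length]; exact htrans.symm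
    have hstep : ∀ t (ht : t < l.length),
        omegaP π l (t+1) = omegaP π l t * adjSwap n (l.get ⟨t, ht⟩) := by
      intro t ht
      simp only [omegaP]
      rw [List.take_succ, List.getElem?_eq_getElem ht]
      simp only [Option.toList_some, List.map_append, List.map_cons, List.map_nil,
        List.prod_append, List.prod_cons, List.prod_nil, mul_one, mul_assoc,
        List.get_eq_getElem]
    -- every j in invWith flips at some step
    have hex : ∀ j ∈ invWith π σ i, ∃ t, t < l.length ∧
        ¬((omegaP π l t)⁻¹ i < (omegaP π l t)⁻¹ j ↔
          (omegaP π l (t+1))⁻¹ i < (omegaP π l (t+1))⁻¹ j) := by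
      intro j hj
      simp only [invWith, Finset.mem_filter, Finset.mem_univ, true_and] at hj
      by_contra hno
      push_neg at hno
      apply hj
      have key : ∀ t, t ≤ l.length →
          ((omegaP π l 0)⁻¹ i < (omegaP π l 0)⁻¹ j ↔
            (omegaP π l t)⁻¹ i < (omegaP π l t)⁻¹ j) := by
        intro t
        induction t with
        | zero => intro _; exact Iff.rfl
        | succ t ih =>
          intro ht
          exact (ih (Nat.le_of_succ_le ht)).trans (hno t (Nat.lt_of_succ_le ht))
      have := key l.length le_rfl
      rwa [h0, hfin] at this
    -- at a flip step, i and j occupy the two swapped positions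
    have hpair : ∀ t (ht : t < l.length) (j : Fin n),
        ¬((omegaP π l t)⁻¹ i < (omegaP π l t)⁻¹ j ↔
          (omegaP π l (t+1))⁻¹ i < (omegaP π l (t+1))⁻¹ j) →
        ∃ hh : l.get ⟨t, ht⟩ + 1 < n,
          ((omegaP π l t)⁻¹ i = ⟨l.get ⟨t, ht⟩, Nat.lt_of_succ_lt hh⟩ ∧
            (omegaP π l t)⁻¹ j = ⟨l.get ⟨t, ht⟩ + 1, hh⟩) ∨
          ((omegaP π l t)⁻¹ i = ⟨l.get ⟨t, ht⟩ + 1, hh⟩ ∧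
            (omegaP π l t)⁻¹ j = ⟨l.get ⟨t, ht⟩, Nat.lt_of_succ_lt hh⟩) := by
      intro t ht j hD
      have hh : l.get ⟨t, ht⟩ + 1 < n := hvalid _ (List.get_mem l _)
      refine ⟨hh, ?_⟩
      have hsw : adjSwap n (l.get ⟨t, ht⟩) =
          Equiv.swap ⟨l.get ⟨t, ht⟩, Nat.lt_of_succ_lt hh⟩ ⟨l.get ⟨t, ht⟩ + 1, hh⟩ := by
        rw [adjSwap, dif_pos hh]
      have hinv : ∀ x : Fin n, (omegaP π l (t+1))⁻¹ x =
          Equiv.swap (⟨l.get ⟨t, ht⟩, Nat.lt_of_succ_lt hh⟩ : Fin n) ⟨l.get ⟨t, ht⟩ + 1, hh⟩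
            ((omegaP π l t)⁻¹ x) := by
        intro x
        rw [hstep t ht, hsw, mul_inv_rev, Equiv.swap_inv]
        rfl
      rw [hinv i, hinv j] at hD
      exact adjFlip hh _ _ hD
    -- choice of flip step
    set f : Fin n → ℕ := fun j =>
      if hj : ∃ t, t < l.length ∧
        ¬((omegaP π l t)⁻¹ i < (omegaP π l t)⁻¹ j ↔
          (omegaP π l (t+1))⁻¹ i < (omegaP π l (t+1))⁻¹ j) then hj.choose else 0 with hf
    have hfspec : ∀ j ∈ invWith π σ i, f j < l.length ∧
        ¬((omegaP π l (f j))⁻¹ i < (omegaP π l (f j))⁻¹ j ↔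
          (omegaP π l (f j + 1))⁻¹ i < (omegaP π l (f j + 1))⁻¹ j) := by
      intro j hj
      have hjE := hex j hj
      rw [hf]
      simp only [dif_pos hjE]
      exact hjE.choose_spec
    apply Finset.card_le_card_of_injOn f
    · intro j hj
      obtain ⟨ht, hD⟩ := hfspec j hj
      obtain ⟨hh, hcase⟩ := hpair (f j) ht j hD
      simp only [Finset.mem_coe, Finset.mem_filter, Finset.mem_range]
      refine ⟨ht, ?_⟩
      have hinv : (omegaP π l (f j + 1))⁻¹ i =
          Equiv.swap (⟨l.get ⟨f j, ht⟩, Nat.lt_of_succ_lt hh⟩ : Fin n) ⟨l.get ⟨f j, ht⟩ + 1, hh⟩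
            ((omegaP π l (f j))⁻¹ i) := by
        rw [hstep (f j) ht, adjSwap, dif_pos hh, mul_inv_rev, Equiv.swap_inv]
        rfl
      rcases hcase with ⟨hi1, _⟩ | ⟨hi1, _⟩ <;>
        rw [hinv, hi1] <;>
        simp [Equiv.swap_apply_left, Equiv.swap_apply_right, Fin.ext_iff]
    · intro j hj j' hj' hjj
      obtain ⟨ht, hD⟩ := hfspec j hj
      obtain ⟨ht', hD'⟩ := hfspec j' hj'
      rw [← hjj] at hD' ht'
      obtain ⟨hh, hcase⟩ := hpair (f j) ht j hD
      obtain ⟨hh', hcase'⟩ := hpair (f j) ht j' hD'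
      have hune : (⟨l.get ⟨f j, ht⟩, Nat.lt_of_succ_lt hh⟩ : Fin n) ≠ ⟨l.get ⟨f j, ht⟩ + 1, hh⟩ := by
        simp [Fin.ext_iff]
      apply (omegaP π l (f j))⁻¹.injective
      rcases hcase with ⟨hi1, hj1⟩ | ⟨hi1, hj1⟩ <;>
        rcases hcase' with ⟨hi2, hj2⟩ | ⟨hi2, hj2⟩
      · rw [hj1, hj2]
      · exact absurd (hi1.symm.trans hi2) hune
      · exact absurd (hi2.symm.trans hi1) hune
      · rw [hj1, hj2]
  simp only [omegaP] at H; exact H.trans (Finset.card_le_card (fun t ht => by simpa using ht))
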